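/- arXiv:1512.02356 — 4 statements merged into one kernel-verified Lean document; each statement's English description precedes it below -/
import Mathlib

section
/- If two closed disks together cover a triangle (the closed convex hull of three points), then at least one of the disks contains an entire edge of the triangle; consequently the common radius of the two disks is at least half the length of the shortest edge of the triangle. -/
/-- If two closed disks of common radius `ρ` cover a triangle (convex hull of three
points), then one of the disks contains an entire edge; consequently
`ρ` is at least half the length of the shortest edge. -/
theorem stmt2 (a b c c₁ c₂ : EuclideanSpace ℝ (Fin 2)) (ρ : ℝ)
    (hcov : convexHull ℝ ({a, b, c} : Set (EuclideanSpace ℝ (Fin 2)))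
      ⊆ Metric.closedBall c₁ ρ ∪ Metric.closedBall c₂ ρ) :
    (segment ℝ a b ⊆ Metric.closedBall c₁ ρ ∨ segment ℝ a b ⊆ Metric.closedBall c₂ ρ ∨
     segment ℝ b c ⊆ Metric.closedBall c₁ ρ ∨ segment ℝ b c ⊆ Metric.closedBall c₂ ρ ∨
     segment ℝ c a ⊆ Metric.closedBall c₁ ρ ∨ segment ℝ c a ⊆ Metric.closedBall c₂ ρ) ∧
    min (dist a b) (min (dist b c) (dist c a)) / 2 ≤ ρ := by
  have ha := hcov (subset_convexHull ℝ _ (by simp : a ∈ ({a, b, c} : Set _)))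
  have hb := hcov (subset_convexHull ℝ _ (by simp : b ∈ ({a, b, c} : Set _)))
  have hc := hcov (subset_convexHull ℝ _ (by simp : c ∈ ({a, b, c} : Set _)))
  have key : ∀ (x y d : EuclideanSpace ℝ (Fin 2)),
      x ∈ Metric.closedBall d ρ → y ∈ Metric.closedBall d ρ →
      segment ℝ x y ⊆ Metric.closedBall d ρ ∧ dist x y ≤ 2 * ρ := by
    intro x y d hx hy
    refine ⟨(convex_closedBall d ρ).segment_subset hx hy, ?_⟩
    have ht := dist_triangle x d y
    rw [Metric.mem_closedBall] at hx hy
    rw [dist_comm y d] at hy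
    linarith
  have m1 : min (dist a b) (min (dist b c) (dist c a)) ≤ dist a b := min_le_left _ _
  have m2 : min (dist a b) (min (dist b c) (dist c a)) ≤ dist b c :=
    (min_le_right _ _).trans (min_le_left _ _)
  have m3 : min (dist a b) (min (dist b c) (dist c a)) ≤ dist c a :=
    (min_le_right _ _).trans (min_le_right _ _)
  rcases ha with h1 | h1 <;> rcases hb with h2 | h2 <;> rcases hc with h3 | h3
  · obtain ⟨hs, hd⟩ := key a b c₁ h1 h2; exact ⟨Or.inl hs, by linarith⟩
  · obtain ⟨hs, hd⟩ := key a b c₁ h1 h2; exact ⟨Or.inl hs, by linarith⟩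
  · obtain ⟨hs, hd⟩ := key c a c₁ h3 h1
    exact ⟨Or.inr (Or.inr (Or.inr (Or.inr (Or.inl hs)))), by linarith⟩
  · obtain ⟨hs, hd⟩ := key b c c₂ h2 h3
    exact ⟨Or.inr (Or.inr (Or.inr (Or.inl hs))), by linarith⟩
  · obtain ⟨hs, hd⟩ := key b c c₁ h2 h3
    exact ⟨Or.inr (Or.inr (Or.inl hs)), by linarith⟩
  · obtain ⟨hs, hd⟩ := key c a c₂ h3 h1
    exact ⟨Or.inr (Or.inr (Or.inr (Or.inr (Or.inr hs)))), by linarith⟩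
  · obtain ⟨hs, hd⟩ := key a b c₂ h1 h2; exact ⟨Or.inr (Or.inl hs), by linarith⟩
  · obtain ⟨hs, hd⟩ := key a b c₂ h1 h2; exact ⟨Or.inr (Or.inl hs), by linarith⟩
end

section
/- Let e, f, g, h be the corners of an axis-parallel rectangle with |fg| = L, |ef| = W ≤ L, where fg is a horizontal side of length L. If a point a lies on side he with |ga| = |gf| = L = 1, then the distance from g to the intersection point q of segments ga' and fa'' (where a', a'' on he satisfy |ga'| = |fa''| = 1) is 1/(2√(1 − W²)). -/
/-- In the rectangle with corners `g = (0,0)`, `f = (1,0)`, `e = (1,W)`, `h = (0,W)`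
(length `|fg| = 1`, width `W ≤ √3/2`), letting `a', a''` be the points on side `he`
with `|ga'| = |fa''| = 1`, the intersection point `q` of the segments `ga'` and
`fa''` satisfies `|gq| = 1/(2√(1 − W²))`. -/
theorem stmt10 (W : ℝ) (hW : 0 < W) (hW2 : W ≤ Real.sqrt 3 / 2)
    (g f a' a'' q : EuclideanSpace ℝ (Fin 2))
    (hg0 : g 0 = 0) (hg1 : g 1 = 0) (hf0 : f 0 = 1) (hf1 : f 1 = 0)
    (ha'0 : a' 0 = Real.sqrt (1 - W ^ 2)) (ha'1 : a' 1 = W)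
    (ha''0 : a'' 0 = 1 - Real.sqrt (1 - W ^ 2)) (ha''1 : a'' 1 = W)
    (hq1 : q ∈ segment ℝ g a') (hq2 : q ∈ segment ℝ f a'') :
    dist g q = 1 / (2 * Real.sqrt (1 - W ^ 2)) := by
  set s := Real.sqrt (1 - W ^ 2) with hs
  have hW1 : W ^ 2 ≤ 3 / 4 := by
    nlinarith [Real.sq_sqrt (by norm_num : (3:ℝ) ≥ 0), Real.sqrt_nonneg (3:ℝ), hW2]
  have hpos : (0:ℝ) < 1 - W ^ 2 := by nlinarith
  have hspos : 0 < s := Real.sqrt_pos.mpr hpos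
  have hs2 : s ^ 2 = 1 - W ^ 2 := Real.sq_sqrt hpos.le
  obtain ⟨u, t, hu, ht, hut, hq⟩ := hq1
  obtain ⟨c, d, hc, hd, hcd, hq'⟩ := hq2
  have hq0 : q 0 = t * s := by
    rw [← hq]; simp [PiLp.add_apply, PiLp.smul_apply, hg0, ha'0, smul_eq_mul]
  have hq1' : q 1 = t * W := by
    rw [← hq]; simp [PiLp.add_apply, PiLp.smul_apply, hg1, ha'1, smul_eq_mul]
  have hq0' : q 0 = c + d * (1 - s) := by
    rw [← hq']; simp [PiLp.add_apply, PiLp.smul_apply, hf0, ha''0, smul_eq_mul]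
  have hq1'' : q 1 = d * W := by
    rw [← hq']; simp [PiLp.add_apply, PiLp.smul_apply, hf1, ha''1, smul_eq_mul]
  have htd : t = d := by
    have := hq1'.symm.trans hq1''
    field_simp at this
    exact this
  have hceq : c = 1 - d := by linarith
  have ht2 : t = 1 / (2 * s) := by
    have h1 : t * s = c + d * (1 - s) := hq0.symm.trans hq0'
    rw [hceq, ← htd] at h1
    field_simp
    nlinarith
  have hdist : dist g q = Real.sqrt ((q 0 - g 0)^2 + (q 1 - g 1)^2) := by
    rw [EuclideanSpace.dist_eq, Fin.sum_univ_two, dist_comm]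
    simp [Real.dist_eq, sq_abs]
    ring_nf
  rw [hdist, hg0, hg1, hq0, hq1', ht2]
  rw [show (1 / (2 * s) * s - 0)^2 + (1 / (2 * s) * W - 0)^2
      = (1/(2*s))^2 * (s^2 + W^2) by ring, hs2]
  rw [show (1:ℝ) - W^2 + W^2 = 1 by ring, mul_one]
  exact Real.sqrt_sq (by positivity)
end

section
/- In a quadrilateral with diameter 1 inscribed in a rectangle of length 1 and width W, where the diameter aligns with the horizontal direction, there exists an isosceles triangle with base the diameter segment whose two equal sides have length at least 1/√(4 − W²). -/
lemma aux13 (W W₁ m : ℝ) (hW : 0 < W) (hW1 : W ≤ 1) (hm : 1/2 ≤ m)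
    (hmb : m^2 + W₁^2 ≤ 1) (hmid : W/2 ≤ W₁) :
    1 / Real.sqrt (4 - W^2) ≤ Real.sqrt (1/4 + (W₁/(2*m))^2) := by
  have h4 : (0:ℝ) < 4 - W^2 := by nlinarith
  have hm0 : (0:ℝ) < m := by linarith
  set h := W₁ / (2*m) with hdef
  have hh : h * (2*m) = W₁ := div_mul_cancel₀ _ (by positivity)
  have key : (4 - W^2)⁻¹ ≤ 1/4 + h^2 := by
    rw [inv_le_iff_one_le_mul₀ h4]
    have hhs : 4 * h^2 * m^2 = W₁^2 := by nlinarith [hh]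
    have hq : W^2/4 ≤ W₁^2 := by nlinarith
    have hmsq : m^2 ≤ 1 - W₁^2 := by linarith
    nlinarith [mul_nonneg (sq_nonneg h) (by linarith : (0:ℝ) ≤ 4*W₁^2 - W^2),
      mul_nonneg (sq_nonneg h) (by linarith : (0:ℝ) ≤ 1 - W₁^2 - m^2)]
  calc 1 / Real.sqrt (4 - W^2) = Real.sqrt ((4 - W^2)⁻¹) := by
        rw [Real.sqrt_inv, one_div]
    _ ≤ _ := Real.sqrt_le_sqrt key

/-- A convex quadrilateral `abcd` of diameter `1`, inscribed in a `1 × W` rectangle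
with its diameter `ac` horizontal (`a = (0,0)`, `c = (1,0)`, `b` at height `W₁ ≥ W/2`
on the top side, `d` at depth `W₂` on the bottom side, `W₁ + W₂ = W`),
contains an isosceles triangle with base `ac` whose two equal sides have
length at least `1/√(4 − W²)`. -/
theorem stmt13 (W W₁ W₂ : ℝ) (hW : 0 < W) (hW1 : W ≤ 1)
    (hsum : W₁ + W₂ = W) (hmid : W / 2 ≤ W₁) (hW₂ : 0 ≤ W₂)
    (a b c d : EuclideanSpace ℝ (Fin 2))
    (ha0 : a 0 = 0) (ha1 : a 1 = 0) (hc0 : c 0 = 1) (hc1 : c 1 = 0)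
    (hb1 : b 1 = W₁) (hd1 : d 1 = -W₂)
    (hb0 : b 0 ∈ Set.Icc (0 : ℝ) 1) (hd0 : d 0 ∈ Set.Icc (0 : ℝ) 1)
    (hdiam : ∀ p ∈ ({a, b, c, d} : Set (EuclideanSpace ℝ (Fin 2))),
      ∀ r ∈ ({a, b, c, d} : Set (EuclideanSpace ℝ (Fin 2))), dist p r ≤ 1) :
    ∃ v ∈ convexHull ℝ ({a, b, c, d} : Set (EuclideanSpace ℝ (Fin 2))),
      dist a v = dist c v ∧ 1 / Real.sqrt (4 - W ^ 2) ≤ dist a v := by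
  set x := b 0 with hx
  have hma : a ∈ ({a, b, c, d} : Set (EuclideanSpace ℝ (Fin 2))) := by simp
  have hmb : b ∈ ({a, b, c, d} : Set (EuclideanSpace ℝ (Fin 2))) := by simp
  have hmc : c ∈ ({a, b, c, d} : Set (EuclideanSpace ℝ (Fin 2))) := by simp
  have hW₁ : 0 < W₁ := by linarith
  have hab : dist a b ≤ 1 := hdiam a hma b hmb
  have hcb : dist c b ≤ 1 := hdiam c hmc b hmb
  have distf : ∀ p q : EuclideanSpace ℝ (Fin 2),
      dist p q = Real.sqrt ((p 0 - q 0)^2 + (p 1 - q 1)^2) := by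
    intro p q
    rw [EuclideanSpace.dist_eq, Fin.sum_univ_two]
    simp [Real.dist_eq, sq_abs]
  have hab2 : x^2 + W₁^2 ≤ 1 := by
    rw [distf, ha0, ha1, hb1] at hab
    have h0 : (0:ℝ) ≤ (0 - x)^2 + (0 - W₁)^2 := by positivity
    nlinarith [Real.sq_sqrt h0, Real.sqrt_nonneg ((0 - x)^2 + (0 - W₁)^2)]
  have hcb2 : (1-x)^2 + W₁^2 ≤ 1 := by
    rw [distf, hc0, hc1, hb1] at hcb
    have h0 : (0:ℝ) ≤ (1 - x)^2 + (0 - W₁)^2 := by positivity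
    nlinarith [Real.sq_sqrt h0, Real.sqrt_nonneg ((1 - x)^2 + (0 - W₁)^2)]
  rcases le_or_gt (1/2 : ℝ) x with hxc | hxc
  · -- use segment a b, v = (1-s)•a + s•b with s = 1/(2x)
    have hx0 : (0:ℝ) < x := by linarith
    set s := 1/(2*x) with hs
    have hs0 : 0 ≤ s := by positivity
    have hs1 : s ≤ 1 := by
      rw [hs, div_le_one (by linarith)]; linarith
    refine ⟨(1 - s) • a + s • b, ?_, ?_, ?_⟩
    · exact segment_subset_convexHull hma hmb ⟨1 - s, s, by linarith, hs0, by ring, rfl⟩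
    · rw [distf, distf]
      have e0 : ((1 - s) • a + s • b) 0 = 1/2 := by
        simp only [PiLp.add_apply, PiLp.smul_apply, smul_eq_mul, ha0, ← hx, hs]
        field_simp; ring
      have e1 : ((1 - s) • a + s • b) 1 = s * W₁ := by
        simp only [PiLp.add_apply, PiLp.smul_apply, smul_eq_mul, ha1, hb1]; ring
      rw [e0, e1, ha0, ha1, hc0, hc1]
      norm_num
    · have e0 : ((1 - s) • a + s • b) 0 = 1/2 := by
        simp only [PiLp.add_apply, PiLp.smul_apply, smul_eq_mul, ha0, ← hx, hs]
        field_simp; ring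
      have e1 : ((1 - s) • a + s • b) 1 = W₁ / (2*x) := by
        simp only [PiLp.add_apply, PiLp.smul_apply, smul_eq_mul, ha1, hb1, hs]; ring
      rw [distf, e0, e1, ha0, ha1]
      have := aux13 W W₁ x hW hW1 hxc hab2 hmid
      calc 1 / Real.sqrt (4 - W^2) ≤ Real.sqrt (1/4 + (W₁/(2*x))^2) := this
        _ = Real.sqrt ((0 - 1/2)^2 + (0 - W₁/(2*x))^2) := by ring_nf
  · -- use segment b c, v = s•b + (1-s)•c with s = 1/(2m), m = 1-x
    set m := 1 - x with hmdef
    have hm : (1:ℝ)/2 ≤ m := by rw [hmdef]; linarith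
    have hm0 : (0:ℝ) < m := by linarith
    set s := 1/(2*m) with hs
    have hs0 : 0 ≤ s := by positivity
    have hs1 : s ≤ 1 := by
      rw [hs, div_le_one (by linarith)]; linarith
    have hmb2 : m^2 + W₁^2 ≤ 1 := by rw [hmdef]; exact hcb2
    refine ⟨s • b + (1 - s) • c, ?_, ?_, ?_⟩
    · exact segment_subset_convexHull hmb hmc ⟨s, 1 - s, hs0, by linarith, by ring, rfl⟩
    · rw [distf, distf]
      have e0 : (s • b + (1 - s) • c) 0 = 1/2 := by
        simp only [PiLp.add_apply, PiLp.smul_apply, smul_eq_mul, hc0, ← hx, hs]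
        field_simp; ring
      have e1 : (s • b + (1 - s) • c) 1 = s * W₁ := by
        simp only [PiLp.add_apply, PiLp.smul_apply, smul_eq_mul, hc1, hb1]; ring
      rw [e0, e1, ha0, ha1, hc0, hc1]
      norm_num
    · have e0 : (s • b + (1 - s) • c) 0 = 1/2 := by
        simp only [PiLp.add_apply, PiLp.smul_apply, smul_eq_mul, hc0, ← hx, hs]
        field_simp; ring
      have e1 : (s • b + (1 - s) • c) 1 = W₁ / (2*m) := by
        simp only [PiLp.add_apply, PiLp.smul_apply, smul_eq_mul, hc1, hb1, hs]; ring
      rw [distf, e0, e1, ha0, ha1]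
      have := aux13 W W₁ m hW hW1 hm hmb2 hmid
      calc 1 / Real.sqrt (4 - W^2) ≤ Real.sqrt (1/4 + (W₁/(2*m))^2) := this
        _ = Real.sqrt ((0 - 1/2)^2 + (0 - W₁/(2*m))^2) := by ring_nf
end

section
/- Let a convex quadrilateral abcd of diameter 1 be inscribed with ac horizontal of length 1, a at height 0, b above ac at height W₁ with |ab| ≤ 1, and d below ac at depth W₂ with |cd| = 1, where W₁ ≥ W/2 ≥ W₂ and W₁ + W₂ = W. Then the perpendicular bisector of segment ab, measured from the midpoint of ab to its intersection z with segment cd, has length |m₁z| ≥ W/2. -/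
lemma stmt16_key (W W₁ W₂ t b0 s₂ : ℝ)
    (hsum : W₁ + W₂ = W) (hW₂ : 0 ≤ W₂) (hW₁ : 0 < W₁) (hWW : W₂ ≤ W₁)
    (ht1 : W₁ ≤ t) (ht2 : t ≤ 1)
    (hb0sq : b0 ^ 2 = t ^ 2 - W₁ ^ 2) (hb00 : 0 ≤ b0)
    (hs₂sq : s₂ ^ 2 = 1 - W₂ ^ 2) (hs₂0 : 0 ≤ s₂) :
    W / 2 ≤ (1 - b0 / 2) * W₂ + (W₁ / 2) * s₂ := by
  have ht0 : (0:ℝ) ≤ t := le_trans hW₁.le ht1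
  have htsq : t ^ 2 ≤ 1 := by nlinarith
  have hWWsq : W₂ ^ 2 ≤ W₁ ^ 2 := by nlinarith
  have hb01 : b0 ≤ 1 := by nlinarith
  have hs₂1 : s₂ ≤ 1 := by nlinarith
  have hs₂b0 : b0 ≤ s₂ := by nlinarith
  have hA : (1 - s₂) * (1 + s₂) = W₂ ^ 2 := by nlinarith
  have hB : W₁ ^ 2 ≤ (1 - b0) * (1 + b0) := by nlinarith
  have hC : W₂ * (1 + b0) ≤ W₁ * (1 + s₂) := by nlinarith
  have key2 : W₁ * (1 - s₂) ≤ W₂ * (1 - b0) := by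
    have hpos : (0:ℝ) < (1 + s₂) * (1 + b0) := by positivity
    have step1 : W₁ * (1 - s₂) * ((1 + s₂) * (1 + b0)) = (W₂ * W₁) * (W₂ * (1 + b0)) := by
      rw [show W₁ * (1 - s₂) * ((1 + s₂) * (1 + b0))
          = W₁ * ((1 - s₂) * (1 + s₂)) * (1 + b0) by ring, hA]; ring
    have step2 : (W₂ * W₁) * (W₂ * (1 + b0)) ≤ (W₂ * W₁) * (W₁ * (1 + s₂)) :=
      mul_le_mul_of_nonneg_left hC (mul_nonneg hW₂ hW₁.le)
    have step30 : (W₂ * W₁) * (W₁ * (1 + s₂)) = W₂ * W₁ ^ 2 * (1 + s₂) := by ring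
    have step4 : W₂ * W₁ ^ 2 * (1 + s₂) ≤ W₂ * ((1 - b0) * (1 + b0)) * (1 + s₂) := by
      apply mul_le_mul_of_nonneg_right _ (by positivity)
      exact mul_le_mul_of_nonneg_left hB hW₂
    have step5 : W₂ * ((1 - b0) * (1 + b0)) * (1 + s₂)
        = W₂ * (1 - b0) * ((1 + s₂) * (1 + b0)) := by ring
    exact le_of_mul_le_mul_right (by linarith) hpos
  linarith

lemma stmt16_sqrt (p q W₂ s₂ K : ℝ) (hunit : W₂ ^ 2 + s₂ ^ 2 = 1)
    (hK : K = p * W₂ - q * s₂) (hK0 : 0 ≤ K) :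
    K ≤ Real.sqrt (p ^ 2 + q ^ 2) := by
  have h1 : K ^ 2 ≤ p ^ 2 + q ^ 2 := by
    rw [hK]; nlinarith [sq_nonneg (p * s₂ + q * W₂)]
  calc K = Real.sqrt (K ^ 2) := (Real.sqrt_sq hK0).symm
    _ ≤ _ := Real.sqrt_le_sqrt h1

/-- For the quadrilateral `abcd` with `a = (0,0)`, `c = (1,0)`,
`b = (√(t² − W₁²), W₁)` where `t = |ab| ≤ 1`, and `d = (1 − √(1 − W₂²), −W₂)`
(so `|cd| = 1`), with `W₁ ≥ W/2 ≥ W₂ ≥ 0` and `W₁ + W₂ = W`: the point `z` where the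
perpendicular bisector of `ab` meets segment `cd` satisfies `|m₁z| ≥ W/2`,
`m₁` being the midpoint of `ab`. -/
theorem stmt16 (W W₁ W₂ t : ℝ) (hW : 0 < W)
    (hsum : W₁ + W₂ = W) (hmid1 : W / 2 ≤ W₁) (hmid2 : W₂ ≤ W / 2) (hW₂ : 0 ≤ W₂)
    (ht1 : W₁ ≤ t) (ht2 : t ≤ 1)
    (a b c d m₁ z : EuclideanSpace ℝ (Fin 2))
    (ha0 : a 0 = 0) (ha1 : a 1 = 0) (hc0 : c 0 = 1) (hc1 : c 1 = 0)
    (hb0 : b 0 = Real.sqrt (t ^ 2 - W₁ ^ 2)) (hb1 : b 1 = W₁)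
    (hd0 : d 0 = 1 - Real.sqrt (1 - W₂ ^ 2)) (hd1 : d 1 = -W₂)
    (hm : m₁ = midpoint ℝ a b)
    (hz : z ∈ segment ℝ c d) (hbis : dist z a = dist z b) :
    W / 2 ≤ dist m₁ z := by
  set s₂ := Real.sqrt (1 - W₂ ^ 2) with hs₂def
  set b0 := Real.sqrt (t ^ 2 - W₁ ^ 2) with hb0def
  have hW₁ : 0 < W₁ := lt_of_lt_of_le (by linarith) hmid1
  have hW₂1 : W₂ ≤ 1 := by linarith
  have hs₂sq : s₂ ^ 2 = 1 - W₂ ^ 2 := Real.sq_sqrt (by nlinarith)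
  have hs₂0 : 0 ≤ s₂ := Real.sqrt_nonneg _
  have hb0sq : b0 ^ 2 = t ^ 2 - W₁ ^ 2 := Real.sq_sqrt (by nlinarith)
  have hb00 : 0 ≤ b0 := Real.sqrt_nonneg _
  -- midpoint coordinates
  have hm0 : m₁ 0 = b0 / 2 := by
    rw [hm, midpoint_eq_smul_add]
    simp [PiLp.add_apply, PiLp.smul_apply, smul_eq_mul, ha0, hb0]
    ring
  have hm1 : m₁ 1 = W₁ / 2 := by
    rw [hm, midpoint_eq_smul_add]
    simp [PiLp.add_apply, PiLp.smul_apply, smul_eq_mul, ha1, hb1]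
    ring
  -- z coordinates
  obtain ⟨u, v, hu, hv, huv, hzeq⟩ := hz
  have hz0 : z 0 = u + v * (1 - s₂) := by
    have := congrArg (fun p : EuclideanSpace ℝ (Fin 2) => p 0) hzeq
    simpa [PiLp.add_apply, PiLp.smul_apply, smul_eq_mul, hc0, hd0] using this.symm
  have hz1 : z 1 = -(v * W₂) := by
    have := congrArg (fun p : EuclideanSpace ℝ (Fin 2) => p 1) hzeq
    simpa [PiLp.add_apply, PiLp.smul_apply, smul_eq_mul, hc1, hd1] using this.symm
  clear hzeq hbis hm ha0 ha1 hc0 hc1 hb0 hb1 hd0 hd1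
  have hkey : W / 2 ≤ (1 - b0 / 2) * W₂ + (W₁ / 2) * s₂ :=
    stmt16_key W W₁ W₂ t b0 s₂ hsum hW₂ hW₁ (by linarith) ht1 ht2 hb0sq hb00 hs₂sq hs₂0
  have hcross : (1 - b0 / 2) * W₂ + (W₁ / 2) * s₂
      = (z 0 - m₁ 0) * W₂ - (z 1 - m₁ 1) * s₂ := by
    rw [hz0, hz1, hm0, hm1]
    have huv' : u = 1 - v := by linarith
    rw [huv']; ring
  have hdist : dist m₁ z = Real.sqrt ((z 0 - m₁ 0) ^ 2 + (z 1 - m₁ 1) ^ 2) := by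
    rw [EuclideanSpace.dist_eq]
    congr 1
    simp [Fin.sum_univ_two, Real.dist_eq, sq_abs, abs_sub_comm]
    ring
  have hle : (1 - b0 / 2) * W₂ + (W₁ / 2) * s₂ ≤ dist m₁ z := by
    rw [hdist]
    exact stmt16_sqrt (z 0 - m₁ 0) (z 1 - m₁ 1) W₂ s₂ _ (by linarith) hcross
      (le_trans (by linarith) hkey)
  linarith
end
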